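/- arXiv:2011.08643 — 2 statements merged into one kernel-verified Lean document; each statement's English description precedes it below -/
import Mathlib

section
/- Let s, t be coprime integers greater than 1, σ an s-core, τ a t-core, and n ∈ ℕ₀. Then the set P_{σ,τ}(n) of partitions of n with s-core σ and t-core τ is non-empty if and only if n ≥ m_{σ,τ} and n ≡ m_{σ,τ} (mod st), where m_{σ,τ} is the minimal size of a partition with s-core σ and t-core τ. Moreover if n > m_{σ,τ} and n ≡ m_{σ,τ} (mod st) then |P_{σ,τ}(n)| ≥ st. -/
/-- A partition, given as a weakly decreasing finitely-supported sequence of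
natural numbers (`parts 0` is the first part). -/
structure SeqPartition where
  parts : ℕ →₀ ℕ
  antitone : ∀ ⦃i j : ℕ⦄, i ≤ j → parts j ≤ parts i

namespace SeqPartition

/-- The size `|λ|` of a partition. -/
def size (l : SeqPartition) : ℕ := l.parts.sum fun _ v => v

/-- The beta-set `β(λ) = { λ_r − r : r ≥ 1 }` (here 0-indexed). -/
def betaSet (l : SeqPartition) : Set ℤ :=
  Set.range fun r : ℕ => (l.parts r : ℤ) - (r + 1)

/-- `RemoveHook h l m` : `m` is obtained from `l` by removing a rim `h`-hook;
in beta-set terms, an element `b` of `β(l)` is replaced by `b − h ∉ β(l)`. -/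
def RemoveHook (h : ℕ) (l m : SeqPartition) : Prop :=
  ∃ b : ℤ, b ∈ l.betaSet ∧ b - (h : ℤ) ∉ l.betaSet ∧
    m.betaSet = insert (b - (h : ℤ)) (l.betaSet \ {b})

/-- `l` is an `s`-core: no rim `s`-hook can be removed. -/
def IsCore (s : ℕ) (l : SeqPartition) : Prop := ∀ m : SeqPartition, ¬ RemoveHook s l m

/-- `c` is the `s`-core of `l`: it is obtained from `l` by repeatedly removing
rim `s`-hooks, and is itself an `s`-core. -/
def HasCore (s : ℕ) (l c : SeqPartition) : Prop :=
  Relation.ReflTransGen (RemoveHook s) l c ∧ IsCore s c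

/-- `IsConj l m` : `m` is the conjugate partition of `l`. -/
def IsConj (l m : SeqPartition) : Prop :=
  ∀ r : ℕ, m.parts r = Set.ncard {c : ℕ | r + 1 ≤ l.parts c}

end SeqPartition

/-- The region `U_x = { x + as + bt : a, b > 0 }`. -/
def UpSet (s t : ℕ) (x : ℤ) : Set ℤ :=
  {n : ℤ | ∃ a b : ℕ, 0 < a ∧ 0 < b ∧ n = x + (a : ℤ) * s + (b : ℤ) * t}

/-- The region `L_x = { x − as − bt : a, b ≥ 0 }`. -/
def LowSet (s t : ℕ) (x : ℤ) : Set ℤ :=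
  {n : ℤ | ∃ a b : ℕ, n = x - (a : ℤ) * s - (b : ℤ) * t}

/-- `x` is a pinch-point for `l` : `L_x ⊆ β(l)` and `β(l) ∩ U_x = ∅`. -/
def PinchPoint (s t : ℕ) (x : ℤ) (l : SeqPartition) : Prop :=
  LowSet s t x ⊆ l.betaSet ∧ l.betaSet ∩ UpSet s t x = ∅

/-- The generator `w_i` of the affine symmetric group `W_s` in its level-`t`
action on `ℤ` : `n ↦ n + t` if `n ≡ (i−1)t − (s−1)(t−1)/2 (mod s)`,
`n ↦ n − t` if `n ≡ it − (s−1)(t−1)/2 (mod s)`, and `n ↦ n` otherwise. -/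
def wgen (s t : ℕ) (i : ℤ) : ℤ → ℤ := fun n =>
  if (s : ℤ) ∣ (n + ((s : ℤ) - 1) * ((t : ℤ) - 1) / 2 - (i - 1) * t) then n + t
  else if (s : ℤ) ∣ (n + ((s : ℤ) - 1) * ((t : ℤ) - 1) / 2 - i * t) then n - t
  else n

/-- The monoid of maps `ℤ → ℤ` generated by the `wgen s t i`.  Since each
generator is an involution, this is the image of the level-`t` action
of the affine symmetric group `W_s` on `ℤ`. -/
def WMon (s t : ℕ) : Submonoid (Function.End ℤ) :=
  Submonoid.closure {f | ∃ i : ℤ, f = wgen s t i}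

/-- `l` is `(s,t)`-minimal: no partition of smaller size has the same
`s`-core and `t`-core. -/
def MinimalPart (s t : ℕ) (l : SeqPartition) : Prop :=
  ∀ (m σ τ : SeqPartition), SeqPartition.HasCore s l σ → SeqPartition.HasCore t l τ →
    SeqPartition.HasCore s m σ → SeqPartition.HasCore t m τ → l.size ≤ m.size

namespace SeqPartition

-- basics
def fseq (l : SeqPartition) (r : ℕ) : ℤ := (l.parts r : ℤ) - (r + 1)

lemma betaSet_eq_range (l : SeqPartition) : l.betaSet = Set.range l.fseq := rfl

lemma fseq_strictAnti (l : SeqPartition) : StrictAnti l.fseq := by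
  intro i j hij
  have h1 : l.parts j ≤ l.parts i := l.antitone hij.le
  simp only [fseq]
  omega

lemma fseq_mem (l : SeqPartition) (r : ℕ) : l.fseq r ∈ l.betaSet := ⟨r, rfl⟩

lemma neg_le_fseq (l : SeqPartition) (r : ℕ) : -((r : ℤ)+1) ≤ l.fseq r := by
  simp only [fseq]; omega

lemma mem_le_fseq_zero (l : SeqPartition) {z : ℤ} (hz : z ∈ l.betaSet) : z ≤ l.fseq 0 := by
  obtain ⟨r, rfl⟩ := hz
  exact (l.fseq_strictAnti.antitone (Nat.zero_le r))

lemma fseq_of_zero (l : SeqPartition) {r : ℕ} (h : l.parts r = 0) : l.fseq r = -((r:ℤ)+1) := by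
  simp [fseq, h]

def nb (l : SeqPartition) : ℕ := (l.parts.support.sup id) + 1

lemma parts_eq_zero_of_nb_le (l : SeqPartition) {r : ℕ} (h : l.nb ≤ r) : l.parts r = 0 := by
  by_contra hc
  have : r ∈ l.parts.support := Finsupp.mem_support_iff.2 hc
  have := Finset.le_sup (f := id) this
  simp only [id, nb] at this h
  omega

lemma ext' {l m : SeqPartition} (h : l.parts = m.parts) : l = m := by
  cases l; cases m; simpa using h

end SeqPartition

namespace SeqPartition

lemma coe_window (l : SeqPartition) {N : ℕ} (hN : l.nb ≤ N) :
    ↑((Finset.range N).image l.fseq) = l.betaSet ∩ Set.Ici (-(N:ℤ)) := by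
  ext z
  simp only [Finset.coe_image, Finset.coe_range, Set.mem_image, Set.mem_Iio,
    Set.mem_inter_iff, Set.mem_Ici, betaSet_eq_range, Set.mem_range]
  constructor
  · rintro ⟨r, hr, rfl⟩
    exact ⟨⟨r, rfl⟩, by have := l.neg_le_fseq r; omega⟩
  · rintro ⟨⟨r, rfl⟩, hz⟩
    refine ⟨r, ?_, rfl⟩
    by_contra hc
    push_neg at hc
    have h0 : l.parts r = 0 := l.parts_eq_zero_of_nb_le (le_trans hN hc)
    have := l.fseq_of_zero h0
    omega

lemma size_eq_sum_range (l : SeqPartition) {N : ℕ} (hN : l.nb ≤ N) :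
    l.size = ∑ r ∈ Finset.range N, l.parts r := by
  have hsub : l.parts.support ⊆ Finset.range N := by
    intro r hr
    simp only [Finset.mem_range]
    by_contra hc
    exact (Finsupp.mem_support_iff.1 hr) (l.parts_eq_zero_of_nb_le (by omega))
  rw [size, Finsupp.sum]
  exact Finset.sum_subset hsub (by intro x _ hx; simpa using Finsupp.notMem_support_iff.1 hx)

lemma size_window (l : SeqPartition) {N : ℕ} (hN : l.nb ≤ N) :
    (l.size : ℤ) = (∑ z ∈ (Finset.range N).image l.fseq, z)
      + ∑ r ∈ Finset.range N, ((r:ℤ)+1) := by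
  rw [Finset.sum_image (by intro a _ b _ hab; exact l.fseq_strictAnti.injective hab)]
  simp only [fseq]
  rw [Finset.sum_sub_distrib]
  have := l.size_eq_sum_range hN
  push_cast [this]
  ring

lemma RemoveHook.size_eq {h : ℕ} {l p : SeqPartition} (hr : RemoveHook h l p) :
    l.size = p.size + h := by
  obtain ⟨b, hb, hbh, hβ⟩ := hr
  set N : ℕ := max (max l.nb p.nb) ((h:ℤ) - b).toNat with hNdef
  have hNl : l.nb ≤ N := le_trans (le_max_left _ _) (le_max_left _ _)
  have hNp : p.nb ≤ N := le_trans (le_max_right _ _) (le_max_left _ _)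
  have hNt : ((h:ℤ) - b).toNat ≤ N := le_max_right _ _
  have hNb : -(N:ℤ) ≤ b - h := by omega
  have hbN : -(N:ℤ) ≤ b := by omega
  set Fl := (Finset.range N).image l.fseq with hFl
  set Fp := (Finset.range N).image p.fseq with hFp
  have hcoel := l.coe_window hNl
  have hcoep := p.coe_window hNp
  have hbFl : b ∈ Fl := by
    have : b ∈ (↑Fl : Set ℤ) := by rw [hcoel]; exact ⟨hb, hbN⟩
    exact_mod_cast this
  have hFpeq : Fp = insert (b - h) (Fl.erase b) := by
    apply Finset.coe_injective
    rw [Finset.coe_insert, Finset.coe_erase, hcoep, hcoel, hβ]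
    ext z
    simp only [Set.mem_inter_iff, Set.mem_insert_iff, Set.mem_diff, Set.mem_singleton_iff,
      Set.mem_Ici]
    constructor
    · rintro ⟨h1 | ⟨h2, h3⟩, h4⟩
      · exact Or.inl h1
      · exact Or.inr ⟨⟨h2, h4⟩, h3⟩
    · rintro (rfl | ⟨⟨h2, h4⟩, h3⟩)
      · exact ⟨Or.inl rfl, hNb⟩
      · exact ⟨Or.inr ⟨h2, h3⟩, h4⟩
  have hbhFl : b - (h:ℤ) ∉ Fl.erase b := by
    intro hc
    have : b - (h:ℤ) ∈ (↑Fl : Set ℤ) := by exact_mod_cast Finset.erase_subset _ _ hc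
    rw [hcoel] at this
    exact hbh this.1
  have hsum : ∑ z ∈ Fp, z = (b - h) + ∑ z ∈ Fl.erase b, z := by
    rw [hFpeq, Finset.sum_insert hbhFl]
  have hsum2 : ∑ z ∈ Fl, z = b + ∑ z ∈ Fl.erase b, z := (Finset.add_sum_erase _ _ hbFl).symm
  have e1 := l.size_window hNl
  have e2 := p.size_window hNp
  rw [← hFl] at e1
  rw [← hFp] at e2
  omega

lemma size_chain {s : ℕ} {l c : SeqPartition} (hc : Relation.ReflTransGen (RemoveHook s) l c) :
    ∃ k : ℕ, l.size = c.size + k * s := by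
  induction hc with
  | refl => exact ⟨0, by simp⟩
  | tail _ hbc ih =>
      obtain ⟨k, hk⟩ := ih
      have := RemoveHook.size_eq hbc
      exact ⟨k + 1, by rw [hk, this]; ring⟩

end SeqPartition

namespace SeqPartition

lemma exists_addHook (l : SeqPartition) (x : ℤ) (h : ℕ) (hh : 0 < h)
    (hx : x ∈ l.betaSet) (hxh : x + h ∉ l.betaSet) :
    ∃ p : SeqPartition, p.betaSet = insert (x + h) (l.betaSet \ {x}) := by
  rw [betaSet_eq_range] at hx hxh
  obtain ⟨r₀, hr₀⟩ := hx
  have hfne : ∀ r, l.fseq r ≠ x + h := fun r hc => hxh ⟨r, hc⟩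
  have hSA := l.fseq_strictAnti
  have hP : l.fseq r₀ < x + h := by omega
  have hex : ∃ r, l.fseq r < x + h := ⟨r₀, hP⟩
  set r₁ := Nat.find hex with hr₁def
  have hr₁spec : l.fseq r₁ < x + h := Nat.find_spec hex
  have hr₁min : ∀ r, r < r₁ → x + h < l.fseq r := by
    intro r hr
    have h1 := Nat.find_min hex hr
    have h2 := hfne r
    omega
  have hr₁le : r₁ ≤ r₀ := Nat.find_le hP
  set μ : ℕ → ℕ := fun r =>
    if r < r₁ then l.parts r else if r = r₁ then (x + h + r₁ + 1).toNat
    else if r ≤ r₀ then l.parts (r-1) + 1 else l.parts r with hμdef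
  have hμsupp : ∀ r, μ r ≠ 0 → r ∈ Finset.range (r₀+1) ∪ l.parts.support := by
    intro r hr
    simp only [Finset.mem_union, Finset.mem_range, Finsupp.mem_support_iff]
    by_contra hc
    push_neg at hc
    obtain ⟨h1, h2⟩ := hc
    have : μ r = l.parts r := by
      simp only [hμdef]
      rw [if_neg (by omega), if_neg (by omega), if_neg (by omega)]
    exact hr (by rw [this, h2])
  have hpos : 0 ≤ x + h + r₁ + 1 := by
    have := l.neg_le_fseq r₁; omega
  have hg1 : ∀ r, r < r₁ → (μ r : ℤ) - ((r:ℤ)+1) = l.fseq r := by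
    intro r hr
    simp only [hμdef, if_pos hr, fseq]
  have hg2 : (μ r₁ : ℤ) - ((r₁:ℤ)+1) = x + h := by
    simp only [hμdef, lt_irrefl, if_neg, if_pos rfl, ite_false, ite_true]
    rw [Int.toNat_of_nonneg hpos]
    ring
  have hg3 : ∀ r, r₁ < r → r ≤ r₀ → (μ r : ℤ) - ((r:ℤ)+1) = l.fseq (r-1) := by
    intro r hlt hle
    simp only [hμdef]
    rw [if_neg (by omega), if_neg (by omega), if_pos hle, fseq]
    have : ((r-1:ℕ):ℤ) = (r:ℤ) - 1 := by omega
    rw [this]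
    push_cast
    ring
  have hg4 : ∀ r, r₀ < r → (μ r : ℤ) - ((r:ℤ)+1) = l.fseq r := by
    intro r hr
    simp only [hμdef]
    rw [if_neg (by omega), if_neg (by omega), if_neg (by omega), fseq]
  have hadj : ∀ r : ℕ, (μ (r+1) : ℤ) - ((r:ℤ)+2) < (μ r : ℤ) - ((r:ℤ)+1) := by
    intro r
    have hcast : ((r+1:ℕ):ℤ) + 1 = (r:ℤ) + 2 := by push_cast; ring
    rcases lt_trichotomy (r+1) r₁ with hc | hc | hc
    · have e1 := hg1 (r+1) hc
      have e2 := hg1 r (by omega)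
      have := hSA (show r < r+1 by omega)
      omega
    · have e1 := hg2
      rw [← hc] at e1
      have e2 := hg1 r (by omega)
      have := hr₁min r (by omega)
      omega
    · -- r ≥ r₁
      rcases Nat.lt_or_ge r₀ (r+1) with hc2 | hc2
      · -- r+1 > r₀
        have e1 := hg4 (r+1) hc2
        rcases Nat.eq_or_lt_of_le hr₁le with he | hlt0
        · -- r₁ = r₀
          rcases Nat.lt_or_ge r₀ r with hr0r | hr0r
          · have e2 := hg4 r hr0r
            have := hSA (show r < r+1 by omega)
            omega
          · -- r ≤ r₀ and r ≥ r₁ = r₀ so r = r₀ = r₁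
            have hrr : r = r₁ := by omega
            have e2 := hg2
            rw [← hrr] at e2
            have h3 := hSA (show r₁ < r+1 by omega)
            omega
          -- done?
        · -- r₁ < r₀
          rcases Nat.lt_or_ge r₀ r with hr0r | hr0r
          · have e2 := hg4 r hr0r
            have := hSA (show r < r+1 by omega)
            omega
          · -- r ≤ r₀, r+1 > r₀ so r = r₀ > r₁
            have e2 := hg3 r (by omega) (by omega)
            have := hSA (show r - 1 < r+1 by omega)
            omega
      · -- r+1 ≤ r₀
        have e1 := hg3 (r+1) (by omega) hc2
        have hsub : (r+1) - 1 = r := by omega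
        rw [hsub] at e1
        rcases Nat.eq_or_lt_of_le (show r₁ ≤ r by omega) with he | hlt
        · have e2 := hg2
          rw [he] at e2
          have h3 := hr₁spec
          rw [he] at h3
          omega
        · have e2 := hg3 r hlt (by omega)
          have := hSA (show r - 1 < r by omega)
          omega
  have hμanti : ∀ r, μ (r+1) ≤ μ r := by
    intro r
    have := hadj r
    push_cast at this
    omega
  refine ⟨⟨Finsupp.onFinset _ μ hμsupp, fun i j hij => ?_⟩, ?_⟩
  · simpa using antitone_nat_of_succ_le hμanti hij
  · rw [betaSet_eq_range l]
    show Set.range (fun r : ℕ => ((Finsupp.onFinset _ μ hμsupp : ℕ →₀ ℕ) r : ℤ) - (r+1)) = _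
    simp only [Finsupp.onFinset_apply]
    ext z
    simp only [Set.mem_range, Set.mem_insert_iff, Set.mem_diff, Set.mem_singleton_iff]
    constructor
    · rintro ⟨r, rfl⟩
      rcases lt_trichotomy r r₁ with hc | hc | hc
      · right
        refine ⟨⟨r, (hg1 r hc).symm ▸ rfl⟩, ?_⟩
        · rw [hg1 r hc]
          have := hr₁min r hc
          omega
      · left
        rw [hc, hg2]
      · rcases Nat.lt_or_ge r₀ r with hc2 | hc2
        · right
          have e := hg4 r hc2
          refine ⟨⟨r, e.symm ▸ rfl⟩, ?_⟩
          rw [e]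
          have := hSA (show r₀ < r by omega)
          omega
        · right
          have e := hg3 r hc hc2
          refine ⟨⟨r-1, e.symm ▸ rfl⟩, ?_⟩
          rw [e]
          have := hSA (show r - 1 < r₀ by omega)
          omega
    · rintro (rfl | ⟨⟨r, rfl⟩, hne⟩)
      · exact ⟨r₁, hg2⟩
      · have hrne : r ≠ r₀ := by
          intro hc
          exact hne (by rw [hc, hr₀])
        rcases lt_trichotomy r r₁ with hc | hc | hc
        · exact ⟨r, hg1 r hc⟩
        · refine ⟨r+1, ?_⟩
          have e := hg3 (r+1) (by omega) (by omega)
          rw [show (r+1)-1 = r by omega] at e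
          rw [e]
        · rcases Nat.lt_or_ge r₀ r with hc2 | hc2
          · exact ⟨r, hg4 r hc2⟩
          · refine ⟨r+1, ?_⟩
            have e := hg3 (r+1) (by omega) (by omega)
            rw [show (r+1)-1 = r by omega] at e
            rw [e]

end SeqPartition

namespace SeqPartition

lemma removeHook_of_swap {l p : SeqPartition} {x : ℤ} {h : ℕ} (hh : 0 < h)
    (hx : x ∈ l.betaSet) (hxh : x + h ∉ l.betaSet)
    (hβ : p.betaSet = insert (x + h) (l.betaSet \ {x})) :
    RemoveHook h p l := by
  have hxx : x + (h:ℤ) - h = x := by ring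
  refine ⟨x + h, by rw [hβ]; exact Set.mem_insert _ _, ?_, ?_⟩
  · rw [hβ, hxx]
    rintro (hc | hc)
    · omega
    · exact hc.2 rfl
  · rw [hβ, hxx]
    ext z
    simp only [Set.mem_insert_iff, Set.mem_diff, Set.mem_singleton_iff]
    constructor
    · intro hz
      by_cases hzx : z = x
      · exact Or.inl hzx
      · exact Or.inr ⟨Or.inr ⟨hz, hzx⟩, fun hc => hxh (hc ▸ hz)⟩
    · rintro (rfl | ⟨(rfl | ⟨hz, _⟩), hne⟩)
      · exact hx
      · exact absurd rfl hne
      · exact hz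

lemma chain_of_swap {s : ℕ} (hs : 0 < s) :
    ∀ u : ℕ, 0 < u → ∀ (q p : SeqPartition) (x : ℤ), x ∈ q.betaSet →
      x + (u:ℤ)*s ∉ q.betaSet →
      p.betaSet = insert (x + (u:ℤ)*s) (q.betaSet \ {x}) →
      Relation.ReflTransGen (RemoveHook s) p q := by
  intro u
  induction u with
  | zero => omega
  | succ u ih =>
    intro _ q p x hx hX hβ
    rcases Nat.eq_zero_or_pos u with rfl | hu
    · have h1 : x + ((0+1:ℕ):ℤ)*s = x + (s:ℤ) := by push_cast; ring
      rw [h1] at hX hβ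
      exact Relation.ReflTransGen.single (removeHook_of_swap hs hx hX hβ)
    · have hXx : x + ((u+1:ℕ):ℤ)*s ≠ x := by
        have : (0:ℤ) < ((u+1:ℕ):ℤ)*s := by positivity
        omega
      have hXxs : x + ((u+1:ℕ):ℤ)*s ≠ x + s := by
        have : (1:ℤ) ≤ (u:ℤ) := by exact_mod_cast hu
        have hs' : (1:ℤ) ≤ (s:ℤ) := by exact_mod_cast hs
        push_cast
        nlinarith
      by_cases hxs : x + (s:ℤ) ∈ q.betaSet
      · -- slide the bead just above `x` down into `x` first
        obtain ⟨p₁, hβ₁⟩ := exists_addHook q (x + s) (u*s) (by positivity) hxs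
          (by
            have : x + (s:ℤ) + (↑(u*s):ℤ) = x + ((u+1:ℕ):ℤ)*s := by push_cast; ring
            rw [this]; exact hX)
        have hβ₁' : p₁.betaSet = insert (x + ((u+1:ℕ):ℤ)*s) (q.betaSet \ {x + s}) := by
          rw [hβ₁]
          congr 1
          push_cast
          ring
        have hstep : RemoveHook s p p₁ := by
          refine ⟨x + s, ?_, ?_, ?_⟩
          · rw [hβ]
            exact Set.mem_insert_of_mem _ ⟨hxs, by intro hc; simp at hc; omega⟩
          · rw [hβ]
            have h2 : x + (s:ℤ) - s = x := by ring
            rw [h2]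
            rintro (hc | hc)
            · exact hXx hc.symm
            · exact hc.2 rfl
          · have h2 : x + (s:ℤ) - s = x := by ring
            rw [h2, hβ₁', hβ]
            ext z
            simp only [Set.mem_insert_iff, Set.mem_diff, Set.mem_singleton_iff]
            constructor
            · rintro (rfl | ⟨hz, hne⟩)
              · exact Or.inr ⟨Or.inl rfl, hXxs⟩
              · by_cases hzx : z = x
                · exact Or.inl hzx
                · exact Or.inr ⟨Or.inr ⟨hz, hzx⟩, hne⟩
            · rintro (rfl | ⟨(rfl | ⟨hz, hzx⟩), hne⟩)
              · exact Or.inr ⟨hx, by intro hc; omega⟩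
              · exact Or.inl rfl
              · exact Or.inr ⟨hz, hne⟩
        have hchain := ih hu q p₁ (x + s) hxs
          (by
            have h3 : x + (s:ℤ) + (u:ℤ)*s = x + ((u+1:ℕ):ℤ)*s := by push_cast; ring
            rw [h3]; exact hX)
          (by
            have h3 : x + (s:ℤ) + (u:ℤ)*s = x + ((u+1:ℕ):ℤ)*s := by push_cast; ring
            rw [h3]; exact hβ₁')
        exact Relation.ReflTransGen.head hstep hchain
      · -- raise `x` by `s` to form the intermediate partition
        obtain ⟨p₂, hβ₂⟩ := exists_addHook q x s hs hx hxs
        have hxsp₂ : x + (s:ℤ) ∈ p₂.betaSet := by rw [hβ₂]; exact Set.mem_insert _ _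
        have hXp₂ : (x + s) + (u:ℤ)*s ∉ p₂.betaSet := by
          have h3 : x + (s:ℤ) + (u:ℤ)*s = x + ((u+1:ℕ):ℤ)*s := by push_cast; ring
          rw [h3, hβ₂]
          rintro (hc | hc)
          · exact hXxs hc
          · exact hX hc.1
        have hβp : p.betaSet = insert ((x + s) + (u:ℤ)*s) (p₂.betaSet \ {x + s}) := by
          have h3 : x + (s:ℤ) + (u:ℤ)*s = x + ((u+1:ℕ):ℤ)*s := by push_cast; ring
          rw [h3, hβ₂, hβ]
          congr 1
          ext z
          simp only [Set.mem_insert_iff, Set.mem_diff, Set.mem_singleton_iff]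
          constructor
          · rintro ⟨hz, hne⟩
            exact ⟨Or.inr ⟨hz, hne⟩, fun hc => hxs (hc ▸ hz)⟩
          · rintro ⟨(rfl | ⟨hz, hzx⟩), hne⟩
            · exact absurd rfl hne
            · exact ⟨hz, hzx⟩
        have hchain := ih hu p₂ p (x + s) hxsp₂ hXp₂ hβp
        exact hchain.tail (removeHook_of_swap hs hx hxs hβ₂)

end SeqPartition

namespace SeqPartition

lemma exists_add_st {s t : ℕ} (hs : 0 < s) (ht : 0 < t) {l σ τ : SeqPartition} {x : ℤ}
    (hx : x ∈ l.betaSet) (hX : x + (↑(s*t):ℤ) ∉ l.betaSet)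
    (hcs : HasCore s l σ) (hct : HasCore t l τ) :
    ∃ p : SeqPartition, p.betaSet = insert (x + (↑(s*t):ℤ)) (l.betaSet \ {x}) ∧
      p.size = l.size + s*t ∧ HasCore s p σ ∧ HasCore t p τ := by
  obtain ⟨p, hβ⟩ := exists_addHook l x (s*t) (by positivity) hx hX
  have hrem : RemoveHook (s*t) p l := removeHook_of_swap (by positivity) hx hX hβ
  have hsize := hrem.size_eq
  have hc1 : (↑(s*t):ℤ) = (t:ℤ)*s := by push_cast; ring
  have hc2 : (↑(s*t):ℤ) = (s:ℤ)*t := by push_cast; ring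
  have hchs : Relation.ReflTransGen (RemoveHook s) p l := by
    apply chain_of_swap hs t ht l p x hx
    · rw [← hc1]; exact hX
    · rw [← hc1]; exact hβ
  have hcht : Relation.ReflTransGen (RemoveHook t) p l := by
    apply chain_of_swap ht s hs l p x hx
    · rw [← hc2]; exact hX
    · rw [← hc2]; exact hβ
  exact ⟨p, hβ, hsize, ⟨hchs.trans hcs.1, hcs.2⟩, ⟨hcht.trans hct.1, hct.2⟩⟩

lemma exists_of_k {s t : ℕ} (hs : 0 < s) (ht : 0 < t) {σ τ : SeqPartition} {m : ℕ}
    (hm : ∃ l : SeqPartition, l.size = m ∧ HasCore s l σ ∧ HasCore t l τ) (k : ℕ) :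
    ∃ l : SeqPartition, l.size = m + k*(s*t) ∧ HasCore s l σ ∧ HasCore t l τ := by
  induction k with
  | zero => simpa using hm
  | succ k ih =>
    obtain ⟨l, hsz, hcs, hct⟩ := ih
    have hx : l.fseq 0 ∈ l.betaSet := l.fseq_mem 0
    have hX : l.fseq 0 + (↑(s*t):ℤ) ∉ l.betaSet := by
      intro hc
      have h1 := l.mem_le_fseq_zero hc
      have h2 : (0:ℤ) < (↑(s*t):ℤ) := by positivity
      omega
    obtain ⟨p, _, hps, hcc1, hcc2⟩ := exists_add_st hs ht hx hX hcs hct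
    exact ⟨p, by rw [hps, hsz]; ring, hcc1, hcc2⟩

lemma exists_max_residue (l : SeqPartition) {d : ℕ} (hd : 0 < d) (c : ℤ) :
    ∃ x : ℤ, x ∈ l.betaSet ∧ (d:ℤ) ∣ (x - c) ∧
      ∀ y ∈ l.betaSet, (d:ℤ) ∣ (y - c) → y ≤ x := by
  have hbdd : ∃ b : ℤ, ∀ z : ℤ, (z ∈ l.betaSet ∧ (d:ℤ) ∣ (z - c)) → z ≤ b :=
    ⟨l.fseq 0, fun z hz => l.mem_le_fseq_zero hz.1⟩
  have hinh : ∃ z : ℤ, z ∈ l.betaSet ∧ (d:ℤ) ∣ (z - c) := by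
    set k : ℕ := (c + l.nb + 1).toNat with hk
    set z : ℤ := c - (k:ℤ)*d with hz
    have hkd : (k:ℤ) ≤ (k:ℤ)*d := by
      have : (1:ℤ) ≤ (d:ℤ) := by exact_mod_cast hd
      nlinarith
    have hzle : z ≤ -(l.nb:ℤ) - 1 := by
      have h1 : c + (l.nb:ℤ) + 1 ≤ (k:ℤ) := by
        rw [hk]; exact_mod_cast Int.self_le_toNat _
      omega
    set r : ℕ := (-z - 1).toNat with hr
    have hrz : (r:ℤ) = -z - 1 := by
      rw [hr]; rw [Int.toNat_of_nonneg (by omega)]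
    have hnbr : l.nb ≤ r := by omega
    have hzero := l.parts_eq_zero_of_nb_le hnbr
    have hfz : l.fseq r = z := by
      rw [l.fseq_of_zero hzero]; omega
    exact ⟨z, ⟨r, hfz⟩, ⟨-(k:ℤ), by rw [hz]; ring⟩⟩
  obtain ⟨x, hx, hmax⟩ := Int.exists_greatest_of_bdd hbdd hinh
  exact ⟨x, hx.1, hx.2, fun y h1 h2 => hmax y ⟨h1, h2⟩⟩

lemma parts_le_size (l : SeqPartition) (i : ℕ) : l.parts i ≤ l.size := by
  have h2 : l.size = ∑ r ∈ Finset.range (l.nb + i + 1), l.parts r :=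
    l.size_eq_sum_range (by omega)
  rw [h2]
  exact Finset.single_le_sum (f := fun r => l.parts r) (fun _ _ => Nat.zero_le _)
    (Finset.mem_range.2 (by omega))

lemma parts_eq_zero_of_size_le (l : SeqPartition) {i : ℕ} (hi : l.size ≤ i) :
    l.parts i = 0 := by
  by_contra hc
  have h1 : ∀ j, j ≤ i → 1 ≤ l.parts j := fun j hj => by
    have := l.antitone hj
    omega
  set N := l.nb + i + 1 with hN
  have h2 : l.size = ∑ r ∈ Finset.range N, l.parts r := l.size_eq_sum_range (by omega)
  have h3 : ∑ r ∈ Finset.range (i+1), 1 ≤ ∑ r ∈ Finset.range (i+1), l.parts r :=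
    Finset.sum_le_sum (fun j hj => h1 j (by simp at hj; omega))
  have h4 : ∑ r ∈ Finset.range (i+1), l.parts r ≤ ∑ r ∈ Finset.range N, l.parts r :=
    Finset.sum_le_sum_of_subset (Finset.range_subset_range.2 (by omega))
  simp at h3
  omega

lemma finite_sized (n : ℕ) : {l : SeqPartition | l.size = n}.Finite := by
  have him : Set.InjOn (fun l : SeqPartition => fun i : Fin (n+1) => (⟨min (l.parts i) n, by omega⟩ : Fin (n+1)))
      {l : SeqPartition | l.size = n} := by
    intro l hl l' hl' heq
    simp only [Set.mem_setOf_eq] at hl hl'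
    apply ext'
    ext i
    rcases Nat.lt_or_ge i (n+1) with hi | hi
    · have h5 := congrFun heq ⟨i, hi⟩
      simp only [Fin.mk.injEq] at h5
      have e1 : l.parts i ≤ n := hl ▸ l.parts_le_size i
      have e2 : l'.parts i ≤ n := hl' ▸ l'.parts_le_size i
      omega
    · rw [l.parts_eq_zero_of_size_le (by omega), l'.parts_eq_zero_of_size_le (by omega)]
  apply Set.Finite.of_finite_image _ him
  exact Set.Finite.subset (Set.finite_univ) (Set.subset_univ _)

end SeqPartition

set_option maxHeartbeats 1000000

/-- `P_{σ,τ}(n)` is non-empty iff `n ≥ m_{σ,τ}` and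
`n ≡ m_{σ,τ} (mod st)`; and `|P_{σ,τ}(n)| ≥ st` when `n > m_{σ,τ}`. -/
theorem stmt8 (s t : ℕ) (hs : 1 < s) (ht : 1 < t) (hst : Nat.Coprime s t)
    (σ τ : SeqPartition) (hσ : SeqPartition.IsCore s σ) (hτ : SeqPartition.IsCore t τ)
    (m : ℕ)
    (hm : ∃ l : SeqPartition, l.size = m ∧ SeqPartition.HasCore s l σ ∧ SeqPartition.HasCore t l τ)
    (hmin : ∀ l : SeqPartition, SeqPartition.HasCore s l σ → SeqPartition.HasCore t l τ → m ≤ l.size)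
    (n : ℕ) :
    ((∃ l : SeqPartition, l.size = n ∧ SeqPartition.HasCore s l σ ∧ SeqPartition.HasCore t l τ) ↔
      (m ≤ n ∧ n ≡ m [MOD s * t])) ∧
    (m < n → n ≡ m [MOD s * t] →
      s * t ≤ {l : SeqPartition | l.size = n ∧ SeqPartition.HasCore s l σ ∧
        SeqPartition.HasCore t l τ}.ncard) := by
  have hs0 : 0 < s := by omega
  have ht0 : 0 < t := by omega
  have hst0 : (0:ℤ) < (↑(s*t):ℤ) := by positivity
  obtain ⟨l₀, hl₀size, hl₀s, hl₀t⟩ := hm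
  have hkey : ∀ l : SeqPartition, SeqPartition.HasCore s l σ → SeqPartition.HasCore t l τ →
      (↑(s*t):ℤ) ∣ (l.size : ℤ) - (m:ℤ) := by
    intro l hcs hct
    obtain ⟨k1, e1⟩ := SeqPartition.size_chain hcs.1
    obtain ⟨k2, e2⟩ := SeqPartition.size_chain hl₀s.1
    obtain ⟨k3, e3⟩ := SeqPartition.size_chain hct.1
    obtain ⟨k4, e4⟩ := SeqPartition.size_chain hl₀t.1
    have c1 : (l.size:ℤ) = (σ.size:ℤ) + (k1:ℤ)*s := by exact_mod_cast e1
    have c2 : (l₀.size:ℤ) = (σ.size:ℤ) + (k2:ℤ)*s := by exact_mod_cast e2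
    have c3 : (l.size:ℤ) = (τ.size:ℤ) + (k3:ℤ)*t := by exact_mod_cast e3
    have c4 : (l₀.size:ℤ) = (τ.size:ℤ) + (k4:ℤ)*t := by exact_mod_cast e4
    have cm : (l₀.size:ℤ) = (m:ℤ) := by exact_mod_cast hl₀size
    have hds : (s:ℤ) ∣ (l.size : ℤ) - (m:ℤ) :=
      ⟨(k1:ℤ) - (k2:ℤ), by linear_combination c1 - c2 + cm⟩
    have hdt : (t:ℤ) ∣ (l.size : ℤ) - (m:ℤ) :=
      ⟨(k3:ℤ) - (k4:ℤ), by linear_combination c3 - c4 + cm⟩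
    have hco : IsCoprime (s:ℤ) (t:ℤ) := by
      rw [Nat.isCoprime_iff_coprime]; exact hst
    have := hco.mul_dvd hds hdt
    have hc : (↑(s*t):ℤ) = (s:ℤ)*(t:ℤ) := by push_cast; ring
    rw [hc]
    exact this
  constructor
  · constructor
    · rintro ⟨l, rfl, hcs, hct⟩
      refine ⟨hmin l hcs hct, ?_⟩
      rw [Nat.modEq_iff_dvd]
      exact dvd_sub_comm.mp (hkey l hcs hct)
    · rintro ⟨hmn, hmod⟩
      have hdvd : s*t ∣ n - m := (Nat.modEq_iff_dvd' hmn).1 hmod.symm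
      obtain ⟨k, hk⟩ := hdvd
      have hk2 : n - m = k * (s*t) := by rw [hk]; ring
      obtain ⟨l, hsz, h1, h2⟩ :=
        SeqPartition.exists_of_k hs0 ht0 ⟨l₀, hl₀size, hl₀s, hl₀t⟩ k
      exact ⟨l, by omega, h1, h2⟩
  · intro hlt hmod
    classical
    have hdvd : s*t ∣ n - m := (Nat.modEq_iff_dvd' hlt.le).1 hmod.symm
    obtain ⟨k, hk⟩ := hdvd
    rcases Nat.eq_zero_or_pos k with rfl | hkpos
    · simp at hk; omega
    obtain ⟨l₁, hl₁sz, hl₁s, hl₁t⟩ :=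
      SeqPartition.exists_of_k hs0 ht0 ⟨l₀, hl₀size, hl₀s, hl₀t⟩ (k-1)
    have hl₁n : l₁.size + s*t = n := by
      have e : (k-1)*(s*t) + s*t = k*(s*t) := by
        have hke : k - 1 + 1 = k := by omega
        calc (k-1)*(s*t) + s*t = ((k-1)+1)*(s*t) := by ring
          _ = k*(s*t) := by rw [hke]
      have e2 : n - m = k*(s*t) := by rw [hk]; ring
      omega
    have hch : ∀ c : Fin (s*t), ∃ x : ℤ, x ∈ l₁.betaSet ∧ (↑(s*t):ℤ) ∣ (x - ((c:ℕ):ℤ)) ∧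
        ∀ y ∈ l₁.betaSet, (↑(s*t):ℤ) ∣ (y - ((c:ℕ):ℤ)) → y ≤ x :=
      fun c => SeqPartition.exists_max_residue l₁ (by positivity) ((c:ℕ):ℤ)
    choose xf hx1 hx2 hx3 using hch
    have hX : ∀ c, xf c + (↑(s*t):ℤ) ∉ l₁.betaSet := by
      intro c hc
      have hdd : (↑(s*t):ℤ) ∣ (xf c + (↑(s*t):ℤ)) - ((c:ℕ):ℤ) := by
        obtain ⟨e, he⟩ := hx2 c
        exact ⟨e + 1, by rw [mul_add, ← he]; ring⟩
      have h1 := hx3 c _ hc hdd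
      omega
    have hpf : ∀ c : Fin (s*t), ∃ p : SeqPartition,
        p.betaSet = insert (xf c + (↑(s*t):ℤ)) (l₁.betaSet \ {xf c}) ∧
        p.size = l₁.size + s*t ∧ SeqPartition.HasCore s p σ ∧ SeqPartition.HasCore t p τ :=
      fun c => SeqPartition.exists_add_st hs0 ht0 (hx1 c) (hX c) hl₁s hl₁t
    choose pf hp1 hp2 hp3 hp4 using hpf
    have hinj : Function.Injective pf := by
      intro c c' hcc
      have hmem : xf c + (↑(s*t):ℤ) ∈ (pf c').betaSet := by
        rw [← hcc, hp1]; exact Set.mem_insert _ _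
      rw [hp1] at hmem
      rcases hmem with heq | hmem
      · have hxeq : xf c = xf c' := by omega
        have d1 := hx2 c
        have d2 := hx2 c'
        rw [hxeq] at d1
        obtain ⟨a1, ha1⟩ := d1
        obtain ⟨a2, ha2⟩ := d2
        have h7 : ((c':ℕ):ℤ) - ((c:ℕ):ℤ) = (↑(s*t):ℤ) * (a1 - a2) := by
          rw [mul_sub]; omega
        have hb1 : ((c:ℕ):ℤ) < ↑(s*t) := by exact_mod_cast c.2
        have hb2 : ((c':ℕ):ℤ) < ↑(s*t) := by exact_mod_cast c'.2
        have hb3 : (0:ℤ) ≤ ((c:ℕ):ℤ) := Int.ofNat_nonneg _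
        have hb4 : (0:ℤ) ≤ ((c':ℕ):ℤ) := Int.ofNat_nonneg _
        have habs : |((c':ℕ):ℤ) - ((c:ℕ):ℤ)| < (↑(s*t):ℤ) := by
          rw [abs_lt]; constructor <;> omega
        have hz : ((c':ℕ):ℤ) - ((c:ℕ):ℤ) = 0 :=
          Int.eq_zero_of_abs_lt_dvd ⟨a1 - a2, h7⟩ habs
        apply Fin.ext
        omega
      · exact absurd hmem.1 (hX c)
    have hsub : ↑(Finset.image pf Finset.univ) ⊆
        {l : SeqPartition | l.size = n ∧ SeqPartition.HasCore s l σ ∧ SeqPartition.HasCore t l τ} := by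
      intro p hp
      rw [Finset.mem_coe, Finset.mem_image] at hp
      obtain ⟨c, -, rfl⟩ := hp
      exact ⟨by rw [hp2 c]; omega, hp3 c, hp4 c⟩
    have hfin : {l : SeqPartition | l.size = n ∧ SeqPartition.HasCore s l σ ∧
        SeqPartition.HasCore t l τ}.Finite :=
      (SeqPartition.finite_sized n).subset (fun l hl => hl.1)
    have hcard : (Finset.image pf Finset.univ).card = s*t := by
      rw [Finset.card_image_of_injective _ hinj, Finset.card_univ, Fintype.card_fin]
    calc s*t = ((Finset.image pf Finset.univ : Finset SeqPartition) : Set SeqPartition).ncard := by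
          rw [Set.ncard_coe_finset, hcard]
      _ ≤ _ := Set.ncard_le_ncard hsub hfin
end

section
/- Let s, t be coprime integers greater than 1 and x ∈ ℤ. The map sending an s×t matrix m = (m_{ij}) with entries in {0,1} and exactly (st − s − t − 1)/2 − x entries equal to 1 to the partition with beta-set L_x ∪ { x − st + it + js : m_{ij} = 1 } (indices 1 ≤ i ≤ s, 1 ≤ j ≤ t) is a bijection onto the set of partitions having x as a pinch-point. -/
section Aux

lemma sa_le_sub {f : ℕ → ℤ} (hf : StrictAnti f) (a m : ℕ) : f (a + m) ≤ f a - m := by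
  induction m with
  | zero => simp
  | succ m ih =>
    have h1 : f (a + (m+1)) < f (a + m) := hf (by omega)
    push_cast
    omega

/-- Two strictly antitone functions ℕ → ℤ with the same range are equal. -/
lemma strictAnti_range_eq {f g : ℕ → ℤ} (hf : StrictAnti f) (hg : StrictAnti g)
    (h : Set.range f = Set.range g) : f = g := by
  funext r
  induction r using Nat.strong_induction_on with
  | _ r ih =>
    have h1 : f r ≤ g r := by
      obtain ⟨k, hk⟩ : f r ∈ Set.range g := h ▸ Set.mem_range_self r
      have hrk : r ≤ k := by
        by_contra hlt
        push_neg at hlt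
        have hfk : f k = f r := (ih k hlt).trans hk
        exact absurd (hf.injective hfk) (Nat.ne_of_lt hlt)
      calc f r = g k := hk.symm
        _ ≤ g r := hg.antitone hrk
    have h2 : g r ≤ f r := by
      obtain ⟨k, hk⟩ : g r ∈ Set.range f := h.symm ▸ Set.mem_range_self r
      have hrk : r ≤ k := by
        by_contra hlt
        push_neg at hlt
        have hfk : g k = g r := (ih k hlt).symm.trans hk
        exact absurd (hg.injective hfk) (Nat.ne_of_lt hlt)
      calc g r = f k := hk.symm
        _ ≤ f r := hf.antitone hrk
    omega

lemma partition_f_strictAnti (l : SeqPartition) :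
    StrictAnti (fun r : ℕ => (l.parts r : ℤ) - (r + 1)) := by
  apply strictAnti_nat_of_succ_lt
  intro n
  have := l.antitone (Nat.le_succ n)
  have h2 : ((l.parts (n+1) : ℤ)) ≤ l.parts n := by exact_mod_cast this
  push_cast
  omega

lemma betaSet_inj {l m : SeqPartition} (h : l.betaSet = m.betaSet) : l = m := by
  have := strictAnti_range_eq (partition_f_strictAnti l) (partition_f_strictAnti m) h
  have hp : ∀ r, l.parts r = m.parts r := by
    intro r
    have := congrFun this r
    omega
  cases l with
  | mk pl al =>
    cases m with
    | mk pm am =>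
      simp only [SeqPartition.mk.injEq]
      exact Finsupp.ext hp

end Aux

section Construct

lemma exists_partition (y : ℤ) (T : Finset ℤ) (hT : ∀ n ∈ T, y ≤ n)
    (hcard : (T.card : ℤ) = -y) :
    ∃ l : SeqPartition, l.betaSet = {n : ℤ | n < y} ∪ (T : Set ℤ) := by
  classical
  set k := T.card with hk
  have e := T.orderIsoOfFin hk.symm
  set b : ℕ → ℤ := fun r => if h : r < k then (e ⟨k - 1 - r, by omega⟩ : ℤ)
    else y - 1 - ((r - k : ℕ) : ℤ) with hb
  have hbT : ∀ r (h : r < k), b r = (e ⟨k - 1 - r, by omega⟩ : ℤ) := by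
    intro r h; simp only [hb, dif_pos h]
  have hblow : ∀ r, k ≤ r → b r = y - 1 - ((r - k : ℕ) : ℤ) := by
    intro r h
    have h' : ¬ r < k := by omega
    simp only [hb, dif_neg h']
  have hbanti : StrictAnti b := by
    apply strictAnti_nat_of_succ_lt
    intro r
    by_cases h1 : r + 1 < k
    · rw [hbT r (by omega), hbT (r+1) h1]
      have : (⟨k - 1 - (r+1), by omega⟩ : Fin k) < ⟨k - 1 - r, by omega⟩ := by
        simp only [Fin.mk_lt_mk]; omega
      exact_mod_cast e.strictMono this
    · by_cases h2 : r < k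
      · rw [hbT r h2, hblow (r+1) (by omega)]
        have hmem := (e ⟨k - 1 - r, by omega⟩).2
        have := hT _ hmem
        have h3 : ((r + 1 - k : ℕ) : ℤ) = 0 := by
          have : r + 1 - k = 0 := by omega
          simp [this]
        omega
      · rw [hblow r (by omega), hblow (r+1) (by omega)]
        have h3 : ((r + 1 - k : ℕ) : ℤ) = ((r - k : ℕ) : ℤ) + 1 := by
          push_cast [Nat.sub_add_comm]
          omega
        omega
  have hb0 : ∀ r, k ≤ r → b r + r + 1 = 0 := by
    intro r h
    rw [hblow r h]
    have : ((r - k : ℕ) : ℤ) = (r : ℤ) - k := by omega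
    omega
  have hbpos : ∀ r : ℕ, 0 ≤ b r + r + 1 := by
    intro r
    by_cases h : k ≤ r
    · have := hb0 r h
      omega
    · have h1 := sa_le_sub hbanti r (k - r)
      have h2 : r + (k - r) = k := by omega
      rw [h2] at h1
      have h3 := hb0 k le_rfl
      have h4 : ((k - r : ℕ) : ℤ) = (k : ℤ) - r := by omega
      omega
  set p : ℕ → ℕ := fun r => (b r + r + 1).toNat with hp
  have hpcast : ∀ r, (p r : ℤ) = b r + r + 1 := fun r => Int.toNat_of_nonneg (hbpos r)
  have hpzero : ∀ a : ℕ, p a ≠ 0 → a ∈ Finset.range k := by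
    intro a ha
    simp only [Finset.mem_range]
    by_contra h
    exact ha (by simp [hp, hb0 a (by omega)])
  refine ⟨⟨Finsupp.onFinset (Finset.range k) p hpzero, ?_⟩, ?_⟩
  · intro i j hij
    simp only [Finsupp.onFinset_apply]
    have h1 := sa_le_sub hbanti i (j - i)
    have h2 : i + (j - i) = j := by omega
    rw [h2] at h1
    have := hpcast i; have := hpcast j
    push_cast at h1
    omega
  · have hfun : (fun r : ℕ => ((Finsupp.onFinset (Finset.range k) p hpzero : ℕ →₀ ℕ) r : ℤ) - (r + 1)) = b := by
      funext r
      simp only [Finsupp.onFinset_apply]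
      have := hpcast r
      omega
    rw [SeqPartition.betaSet, hfun]
    ext n
    simp only [Set.mem_range, Set.mem_union, Set.mem_setOf_eq, Finset.coe_sort_coe,
      Finset.mem_coe]
    constructor
    · rintro ⟨r, rfl⟩
      by_cases h : r < k
      · exact Or.inr (by rw [hbT r h]; exact (e _).2)
      · left
        rw [hblow r (by omega)]
        have : (0:ℤ) ≤ ((r - k : ℕ) : ℤ) := Int.natCast_nonneg _
        omega
    · rintro (hn | hn)
      · refine ⟨k + (y - 1 - n).toNat, ?_⟩
        rw [hblow _ (by omega)]
        have h1 : k + (y - 1 - n).toNat - k = (y - 1 - n).toNat := by omega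
        rw [h1, Int.toNat_of_nonneg (by omega)]
        omega
      · set i := e.symm ⟨n, hn⟩ with hi
        refine ⟨k - 1 - (i : ℕ), ?_⟩
        have hik : (i : ℕ) < k := i.2
        rw [hbT _ (by omega)]
        have h1 : (⟨k - 1 - (k - 1 - (i:ℕ)), by omega⟩ : Fin k) = i := by
          apply Fin.ext; simp only []; omega
        rw [h1, hi]
        simp
end Construct

section Charge

lemma charge (l : SeqPartition) (y : ℤ) (hy : ∀ n : ℤ, n < y → n ∈ l.betaSet) :
    ∃ K : ℕ, (K : ℤ) = -y ∧
      l.betaSet ∩ Set.Ici y =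
        (fun r : ℕ => (l.parts r : ℤ) - (r + 1)) '' Set.Iio K ∧
      (l.betaSet ∩ Set.Ici y).ncard = K ∧ (l.betaSet ∩ Set.Ici y).Finite := by
  classical
  set f : ℕ → ℤ := fun r : ℕ => (l.parts r : ℤ) - (r + 1) with hf
  have hfa : StrictAnti f := partition_f_strictAnti l
  have hex : ∃ r : ℕ, f r < y := by
    refine ⟨(f 0 - y).toNat + 1, ?_⟩
    have h1 := sa_le_sub hfa 0 ((f 0 - y).toNat + 1)
    simp only [Nat.zero_add] at h1
    have h2 : (f 0 - y) ≤ ((f 0 - y).toNat : ℤ) := Int.self_le_toNat _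
    push_cast at h1
    omega
  set K := Nat.find hex with hK
  have hKlt : f K < y := Nat.find_spec hex
  have hmin : ∀ r : ℕ, r < K → y ≤ f r := by
    intro r hr
    have := Nat.find_min hex hr
    omega
  have claim : ∀ m : ℕ, f (K + m) = y - 1 - m := by
    intro m
    induction m using Nat.strong_induction_on with
    | _ m ih =>
      have hle : f (K + m) ≤ y - 1 - m := by
        have := sa_le_sub hfa K m
        omega
      obtain ⟨r, hr0⟩ : (y - 1 - m) ∈ l.betaSet := hy _ (by push_cast; omega)
      have hr : f r = y - 1 - m := hr0
      have hrK : K + m ≤ r := by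
        by_contra hlt
        push_neg at hlt
        by_cases h1 : r < K
        · have := hmin r h1
          omega
        · push_neg at h1
          have h2 : r = K + (r - K) := by omega
          have := ih (r - K) (by omega)
          rw [h2] at hr
          have : (r - K : ℕ) ≠ m := by omega
          have hc : ((r - K : ℕ) : ℤ) ≠ (m : ℤ) := by exact_mod_cast this
          omega
      have := hfa.antitone hrK
      omega
  have hKy : (K : ℤ) = -y := by
    by_contra hne
    have hmem : ∀ m : ℕ, K + m ∈ l.parts.support := by
      intro m
      rw [Finsupp.mem_support_iff]
      intro h0
      have := claim m
      rw [hf] at this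
      simp only [h0] at this
      push_cast at this
      omega
    have hinj : Set.InjOn (fun m : ℕ => K + m) ↑(Finset.range (l.parts.support.card + 1)) := by
      intro a _ b _ hab
      have : K + a = K + b := hab
      omega
    have := Finset.card_le_card_of_injOn (fun m : ℕ => K + m)
      (fun m _ => hmem m) hinj
    simp at this
  have himg : l.betaSet ∩ Set.Ici y = f '' Set.Iio K := by
    ext n
    simp only [Set.mem_inter_iff, Set.mem_Ici, Set.mem_image, Set.mem_Iio,
      SeqPartition.betaSet, Set.mem_range]
    constructor
    · rintro ⟨⟨r, hr0⟩, hge⟩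
      have hr : f r = n := hr0
      refine ⟨r, ?_, hr⟩
      by_contra h1
      push_neg at h1
      have := hfa.antitone h1
      omega
    · rintro ⟨r, hr, hr0⟩
      have hr' : f r = n := hr0
      exact ⟨⟨r, hr'⟩, by have := hmin r hr; omega⟩
  have hfin : (l.betaSet ∩ Set.Ici y).Finite := by
    rw [himg]
    exact (Set.finite_Iio K).image f
  refine ⟨K, hKy, himg, ?_, hfin⟩
  rw [himg, Set.ncard_image_of_injective _ hfa.injective]
  rw [Set.ncard_eq_toFinset_card', Set.toFinset_Iio, Nat.card_Iio]

section Rep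

variable {s t : ℕ} {x : ℤ}

lemma exists_rep (hs : 1 < s) (hst : Nat.Coprime s t) (n : ℤ) :
    ∃ i j : ℤ, 1 ≤ i ∧ i ≤ s ∧ n = x - s*t + i*t + j*s := by
  have hcop : IsCoprime (s : ℤ) (t : ℤ) := by
    rw [Int.isCoprime_iff_gcd_eq_one]
    exact_mod_cast hst
  obtain ⟨u, v, huv⟩ := hcop
  set d := n - x + s*t with hd
  set i := (d*v - 1) % s + 1 with hi
  have hs0 : (0:ℤ) < s := by exact_mod_cast Nat.lt_of_lt_of_le Nat.zero_lt_one hs.le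
  have hmod1 : 0 ≤ (d*v - 1) % s := Int.emod_nonneg _ (by positivity)
  have hmod2 : (d*v - 1) % s < s := Int.emod_lt_of_pos _ hs0
  have hq : (d*v - 1) % s = d*v - 1 - s * ((d*v - 1) / s) := by
    rw [Int.emod_def]
  set q := (d*v - 1) / s with hqdef
  have hieq : i = d*v - s*q := by rw [hi, hq]; ring
  have hdvd : (s : ℤ) ∣ (d - i*t) := by
    exact ⟨d*u + q*t, by linear_combination (-(t:ℤ)) * hieq - d * huv⟩
  obtain ⟨j, hj⟩ := hdvd
  refine ⟨i, j, by omega, by omega, ?_⟩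
  have : j*s = d - i*t := by rw [hj]; ring
  rw [hd] at this
  linarith

lemma uniq_rep (hs : 1 < s) (hst : Nat.Coprime s t) {i j i' j' : ℤ} (h1 : 1 ≤ i) (h2 : i ≤ s) (h1' : 1 ≤ i') (h2' : i' ≤ s)
    (heq : x - s*t + i*t + j*s = x - s*t + i'*t + j'*s) : i = i' ∧ j = j' := by
  have hs0 : (0:ℤ) < s := by exact_mod_cast Nat.lt_of_lt_of_le Nat.zero_lt_one hs.le
  have hdvd : (s : ℤ) ∣ (i - i') * t := ⟨j' - j, by linear_combination heq⟩
  have hcop : Int.gcd (s : ℤ) (t : ℤ) = 1 := by exact_mod_cast hst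
  have hcop2 : IsCoprime (s : ℤ) (t : ℤ) := Int.isCoprime_iff_gcd_eq_one.mpr hcop
  have hdvd2 : (s : ℤ) ∣ (i - i') := hcop2.dvd_of_dvd_mul_right hdvd
  have hii : i = i' := by
    obtain ⟨c, hc⟩ := hdvd2
    have hc0 : c = 0 := by
      rcases lt_trichotomy c 0 with h | h | h
      · nlinarith
      · exact h
      · nlinarith
    rw [hc0, mul_zero] at hc
    omega
  subst hii
  constructor
  · rfl
  · have : j * s = j' * s := by linarith
    exact mul_right_cancel₀ (by positivity) this

lemma low_iff (hs : 1 < s) (hst : Nat.Coprime s t) {n i j : ℤ}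
    (h1 : 1 ≤ i) (h2 : i ≤ s) (hn : n = x - s*t + i*t + j*s) :
    n ∈ LowSet s t x ↔ j ≤ 0 := by
  have hs0 : (0:ℤ) < s := by exact_mod_cast Nat.lt_of_lt_of_le Nat.zero_lt_one hs.le
  constructor
  · rintro ⟨a, b, hab⟩
    obtain ⟨q, r, hrs, hbq⟩ : ∃ q r : ℕ, r < s ∧ b = q * s + r :=
      ⟨b / s, b % s, Nat.mod_lt _ (by omega), (Nat.div_add_mod' b s).symm⟩
    have heq : x - s*t + i*t + j*s = x - s*t + ((s:ℤ) - r)*t + (-(a:ℤ) - q*t)*s := by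
      rw [← hn, hab]
      have : (b:ℤ) = (q:ℤ) * s + r := by exact_mod_cast hbq
      linear_combination -this * (t:ℤ)
    obtain ⟨_, hj⟩ := uniq_rep hs hst h1 h2 (by omega) (by omega) heq
    have ha : (0:ℤ) ≤ a := Int.natCast_nonneg a
    have hq0 : (0:ℤ) ≤ q := Int.natCast_nonneg q
    have ht0 : (0:ℤ) ≤ t := Int.natCast_nonneg t
    rw [hj]
    nlinarith
  · intro hj
    refine ⟨(-j).toNat, (s - i).toNat, ?_⟩
    rw [Int.toNat_of_nonneg (by omega), hn]
    have : ((s - i).toNat : ℤ) = (s:ℤ) - i := by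
      rw [Int.toNat_of_nonneg (by omega)]
    rw [this]
    ring

lemma up_iff (hs : 1 < s) (hst : Nat.Coprime s t) {n i j : ℤ}
    (h1 : 1 ≤ i) (h2 : i ≤ s) (hn : n = x - s*t + i*t + j*s) :
    n ∈ UpSet s t x ↔ (t:ℤ) < j := by
  have hs0 : (0:ℤ) < s := by exact_mod_cast Nat.lt_of_lt_of_le Nat.zero_lt_one hs.le
  constructor
  · rintro ⟨a, b, ha, hb, hab⟩
    obtain ⟨q, r, hrs, hbq⟩ : ∃ q r : ℕ, r < s ∧ b - 1 = q * s + r :=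
      ⟨(b-1) / s, (b-1) % s, Nat.mod_lt _ (by omega), (Nat.div_add_mod' (b-1) s).symm⟩
    have heq : x - s*t + i*t + j*s = x - s*t + ((r:ℤ) + 1)*t + ((a:ℤ) + (q+1)*t)*s := by
      rw [← hn, hab]
      have : (b:ℤ) - 1 = (q:ℤ) * s + r := by
        have : ((b - 1 : ℕ) : ℤ) = (q:ℤ) * s + r := by exact_mod_cast hbq
        omega
      linear_combination this * (t:ℤ)
    obtain ⟨_, hj⟩ := uniq_rep hs hst h1 h2 (by omega) (by omega) heq
    have ha' : (1:ℤ) ≤ a := by exact_mod_cast ha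
    have hq0 : (0:ℤ) ≤ q := Int.natCast_nonneg q
    have ht0 : (0:ℤ) ≤ t := Int.natCast_nonneg t
    rw [hj]
    nlinarith
  · intro hj
    refine ⟨(j - t).toNat, i.toNat, by omega, by omega, ?_⟩
    rw [Int.toNat_of_nonneg (by omega), Int.toNat_of_nonneg (by omega), hn]
    ring

end Rep


section Mid

variable {s t : ℕ} {x : ℤ}

/-- The matrix-cell points. -/
def ptf (s t : ℕ) (x : ℤ) (p : Fin s × Fin t) : ℤ :=
  x - (s:ℤ)*t + (((p.1 : ℕ) : ℤ)+1)*t + (((p.2 : ℕ) : ℤ)+1)*s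

lemma ptf_rep (p : Fin s × Fin t) :
    ptf s t x p = x - (s:ℤ)*t + (((p.1 : ℕ) : ℤ)+1)*t + (((p.2 : ℕ) : ℤ)+1)*s := rfl

lemma ptf_not_low (hs : 1 < s) (hst : Nat.Coprime s t) (p : Fin s × Fin t) :
    ptf s t x p ∉ LowSet s t x := by
  have h1 := p.1.2
  have h2 := p.2.2
  rw [low_iff hs hst (i := ((p.1 : ℕ) : ℤ)+1) (j := ((p.2 : ℕ) : ℤ)+1)
    (by omega) (by omega) (ptf_rep p)]
  omega

lemma ptf_not_up (hs : 1 < s) (hst : Nat.Coprime s t) (p : Fin s × Fin t) :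
    ptf s t x p ∉ UpSet s t x := by
  have h1 := p.1.2
  have h2 := p.2.2
  rw [up_iff hs hst (i := ((p.1 : ℕ) : ℤ)+1) (j := ((p.2 : ℕ) : ℤ)+1)
    (by omega) (by omega) (ptf_rep p)]
  omega

lemma ptf_inj (hs : 1 < s) (hst : Nat.Coprime s t) :
    Function.Injective (ptf s t x) := by
  intro p q h
  have := uniq_rep (x := x) hs hst (i := ((p.1 : ℕ) : ℤ)+1) (j := ((p.2 : ℕ) : ℤ)+1)
    (i' := ((q.1 : ℕ) : ℤ)+1) (j' := ((q.2 : ℕ) : ℤ)+1)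
    (by omega) (by exact_mod_cast p.1.2) (by omega) (by exact_mod_cast q.1.2)
    (by rw [← ptf_rep p, ← ptf_rep q, h])
  have e1 : (p.1 : ℕ) = (q.1 : ℕ) := by omega
  have e2 : (p.2 : ℕ) = (q.2 : ℕ) := by omega
  exact Prod.ext (Fin.ext e1) (Fin.ext e2)

lemma ptf_mem (hs : 1 < s) (ht : 1 < t) (p : Fin s × Fin t) :
    x - (s:ℤ)*t + s + t ≤ ptf s t x p ∧ ptf s t x p ≤ x + (s:ℤ)*t := by
  have h1 := p.1.2
  have h2 := p.2.2
  have c1 : (1:ℤ) ≤ ((p.1 : ℕ) : ℤ)+1 := by omega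
  have c2 : ((p.1 : ℕ) : ℤ)+1 ≤ s := by exact_mod_cast h1
  have c3 : (1:ℤ) ≤ ((p.2 : ℕ) : ℤ)+1 := by omega
  have c4 : ((p.2 : ℕ) : ℤ)+1 ≤ t := by exact_mod_cast h2
  have ht0 : (1:ℤ) ≤ t := by exact_mod_cast ht.le
  have hs0 : (1:ℤ) ≤ s := by exact_mod_cast hs.le
  rw [ptf_rep]
  constructor
  · nlinarith
  · nlinarith

lemma trichotomy (hs : 1 < s) (ht : 1 < t) (hst : Nat.Coprime s t) (n : ℤ) :
    n ∈ LowSet s t x ∨ n ∈ UpSet s t x ∨ ∃ p : Fin s × Fin t, n = ptf s t x p := by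
  obtain ⟨i, j, hi1, hi2, hn⟩ := exists_rep (x := x) hs hst n
  by_cases hj0 : j ≤ 0
  · exact Or.inl ((low_iff hs hst hi1 hi2 hn).mpr hj0)
  · by_cases hjt : (t:ℤ) < j
    · exact Or.inr (Or.inl ((up_iff hs hst hi1 hi2 hn).mpr hjt))
    · refine Or.inr (Or.inr ⟨(⟨(i-1).toNat, by omega⟩, ⟨(j-1).toNat, by omega⟩), ?_⟩)
      rw [ptf_rep]
      have c1 : (((i-1).toNat : ℕ) : ℤ) = i - 1 := by omega
      have c2 : (((j-1).toNat : ℕ) : ℤ) = j - 1 := by omega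
      simp only [Fin.val_mk ,c1, c2]
      linear_combination hn

lemma low_up_disj (hs : 1 < s) (hst : Nat.Coprime s t) (n : ℤ)
    (hl : n ∈ LowSet s t x) (hu : n ∈ UpSet s t x) : False := by
  obtain ⟨i, j, hi1, hi2, hn⟩ := exists_rep (x := x) hs hst n
  have h1 := (low_iff hs hst hi1 hi2 hn).mp hl
  have h2 := (up_iff hs hst hi1 hi2 hn).mp hu
  omega

lemma low_of_lt (hs : 1 < s) (ht : 1 < t) (hst : Nat.Coprime s t) (n : ℤ)
    (hn : n < x - (s:ℤ)*t + s + t) : n ∈ LowSet s t x := by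
  obtain ⟨i, j, hi1, hi2, hrep⟩ := exists_rep (x := x) hs hst n
  rw [low_iff hs hst hi1 hi2 hrep]
  by_contra hj
  push_neg at hj
  have ht0 : (1:ℤ) ≤ t := by exact_mod_cast ht.le
  nlinarith

lemma low_le_x (n : ℤ) (hl : n ∈ LowSet s t x) : n ≤ x := by
  obtain ⟨a, b, hab⟩ := hl
  have h1 : (0:ℤ) ≤ a := Int.natCast_nonneg a
  have h2 : (0:ℤ) ≤ b := Int.natCast_nonneg b
  have h3 : (0:ℤ) ≤ s := Int.natCast_nonneg s
  have h4 : (0:ℤ) ≤ t := Int.natCast_nonneg t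
  nlinarith

/-- The finite part of `L_x` above the cutoff. -/
noncomputable def lowFin (s t : ℕ) (x : ℤ) : Finset ℤ :=
  @Finset.filter _ (· ∈ LowSet s t x) (Classical.decPred _)
    (Finset.Icc (x - (s:ℤ)*t + s + t) (x + (s:ℤ)*t))

lemma mem_lowFin {n : ℤ} : n ∈ lowFin s t x ↔
    (x - (s:ℤ)*t + s + t ≤ n ∧ n ≤ x + (s:ℤ)*t) ∧ n ∈ LowSet s t x := by
  classical
  rw [lowFin]
  rw [Finset.filter_congr_decidable, Finset.mem_filter, Finset.mem_Icc]

lemma count_low (hs : 1 < s) (ht : 1 < t) (hst : Nat.Coprime s t) :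
    2 * ((lowFin s t x).card : ℤ) = (s:ℤ)*t - s - t + 1 := by
  classical
  set y := x - (s:ℤ)*t + s + t with hy
  set I := Finset.Icc y (x + (s:ℤ)*t) with hI
  set A := lowFin s t x with hA
  set B := @Finset.filter _ (· ∈ UpSet s t x) (Classical.decPred _) I with hB
  set Mf := Finset.image (ptf s t x) Finset.univ with hMf
  have hs0 : (1:ℤ) ≤ s := by exact_mod_cast hs.le
  have ht0 : (1:ℤ) ≤ t := by exact_mod_cast ht.le
  have hmemA : ∀ n, n ∈ A ↔ (n ∈ I ∧ n ∈ LowSet s t x) := by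
    intro n; rw [hA, mem_lowFin, hI, Finset.mem_Icc]
  have hmemB : ∀ n, n ∈ B ↔ (n ∈ I ∧ n ∈ UpSet s t x) := by
    intro n; rw [hB, Finset.mem_filter]
  have hcardAB : A.card = B.card := by
    apply Finset.card_bij (fun n _ => 2*x + s + t - n)
    · intro n hn
      rw [hmemA] at hn
      rw [hmemB]
      obtain ⟨hnI, a, b, hab⟩ := hn
      rw [hI, Finset.mem_Icc] at hnI ⊢
      refine ⟨⟨by omega, by omega⟩, a+1, b+1, by omega, by omega, ?_⟩
      push_cast
      linarith
    · intro n hn m hm hnm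
      omega
    · intro n hn
      rw [hmemB] at hn
      obtain ⟨hnI, a, b, ha, hb, hab⟩ := hn
      rw [hI, Finset.mem_Icc] at hnI
      refine ⟨2*x + s + t - n, ?_, by omega⟩
      rw [hmemA]
      rw [hI, Finset.mem_Icc]
      refine ⟨⟨by omega, by omega⟩, a-1, b-1, ?_⟩
      have c1 : ((a - 1 : ℕ) : ℤ) = (a:ℤ) - 1 := by omega
      have c2 : ((b - 1 : ℕ) : ℤ) = (b:ℤ) - 1 := by omega
      rw [c1, c2]
      linarith
  have hdisjAB : Disjoint A B := by
    rw [Finset.disjoint_left]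
    intro n hn hn'
    rw [hmemA] at hn
    rw [hmemB] at hn'
    exact low_up_disj hs hst n hn.2 hn'.2
  have hdisjM : Disjoint (A ∪ B) Mf := by
    rw [Finset.disjoint_right]
    intro n hn hn'
    rw [hMf, Finset.mem_image] at hn
    obtain ⟨p, _, rfl⟩ := hn
    rw [Finset.mem_union, hmemA, hmemB] at hn'
    rcases hn' with h | h
    · exact ptf_not_low hs hst p h.2
    · exact ptf_not_up hs hst p h.2
  have hIeq : I = (A ∪ B) ∪ Mf := by
    ext n
    rw [Finset.mem_union, Finset.mem_union, hmemA, hmemB, hMf, Finset.mem_image]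
    constructor
    · intro hn
      rcases trichotomy (x := x) hs ht hst n with h | h | ⟨p, rfl⟩
      · exact Or.inl (Or.inl ⟨hn, h⟩)
      · exact Or.inl (Or.inr ⟨hn, h⟩)
      · exact Or.inr ⟨p, Finset.mem_univ p, rfl⟩
    · rintro ((h | h) | ⟨p, _, rfl⟩)
      · exact h.1
      · exact h.1
      · have := ptf_mem (x := x) hs ht p
        rw [hI, Finset.mem_Icc]
        exact ⟨this.1, this.2⟩
  have hcardM : Mf.card = s * t := by
    rw [hMf, Finset.card_image_of_injective _ (ptf_inj hs hst)]
    simp [Finset.card_univ]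
  have hcardI : (I.card : ℤ) = 2*(s:ℤ)*t - s - t + 1 := by
    rw [hI, Int.card_Icc]
    rw [Int.toNat_of_nonneg (by nlinarith)]
    rw [hy]
    ring
  have := congrArg Finset.card hIeq
  rw [Finset.card_union_of_disjoint hdisjM, Finset.card_union_of_disjoint hdisjAB,
    hcardM, ← hcardAB] at this
  have : (I.card : ℤ) = 2 * A.card + (s:ℤ)*t := by
    rw [this]; push_cast; ring
  rw [hcardI] at this
  linarith

end Mid


/-- the bijection between `s×t` (0,1)-matrices with
`(st−s−t−1)/2 − x` entries equal to 1 and partitions with pinch-point `x`. -/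
theorem stmt11 (s t : ℕ) (hs : 1 < s) (ht : 1 < t) (hst : Nat.Coprime s t) (x : ℤ) :
    ∃ θ : (Fin s → Fin t → Bool) → SeqPartition,
      Set.BijOn θ
        {m : Fin s → Fin t → Bool |
          2 * (((Finset.univ.filter fun p : Fin s × Fin t => m p.1 p.2 = true).card : ℤ))
            = (s : ℤ) * t - s - t - 1 - 2 * x}
        {l : SeqPartition | PinchPoint s t x l} ∧
      ∀ m : Fin s → Fin t → Bool,
        2 * (((Finset.univ.filter fun p : Fin s × Fin t => m p.1 p.2 = true).card : ℤ))
            = (s : ℤ) * t - s - t - 1 - 2 * x →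
        (θ m).betaSet = LowSet s t x ∪
          {b : ℤ | ∃ (i : Fin s) (j : Fin t), m i j = true ∧
            b = x - (s : ℤ) * t + ((i : ℕ) + 1) * t + ((j : ℕ) + 1) * s} := by
  classical
  set y := x - (s:ℤ)*t + s + t with hy
  set A := lowFin s t x with hA
  set pts : (Fin s → Fin t → Bool) → Set ℤ := fun m =>
    {b : ℤ | ∃ (i : Fin s) (j : Fin t), m i j = true ∧
      b = x - (s : ℤ) * t + ((i : ℕ) + 1) * t + ((j : ℕ) + 1) * s} with hptsdef
  set MfF : (Fin s → Fin t → Bool) → Finset ℤ := fun m =>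
    Finset.image (ptf s t x) (Finset.univ.filter fun p : Fin s × Fin t => m p.1 p.2 = true)
    with hMfF
  have hst0 : (0:ℤ) ≤ (s:ℤ)*t := by positivity
  have hptsF : ∀ m, ↑(MfF m) = pts m := by
    intro m
    ext b
    simp only [hMfF, hptsdef, Finset.coe_image, Set.mem_image, Finset.mem_coe,
      Finset.mem_filter, Finset.mem_univ, true_and, Set.mem_setOf_eq]
    constructor
    · rintro ⟨p, hp, rfl⟩
      exact ⟨p.1, p.2, hp, rfl⟩
    · rintro ⟨i, j, hij, rfl⟩
      exact ⟨(i, j), hij, rfl⟩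
  set T : (Fin s → Fin t → Bool) → Finset ℤ := fun m => A ∪ MfF m with hT
  have h1 : ∀ m, ∀ n ∈ T m, y ≤ n := by
    intro m n hn
    rw [hT, Finset.mem_union] at hn
    rcases hn with hn | hn
    · exact ((mem_lowFin.mp hn).1).1
    · rw [hMfF, Finset.mem_image] at hn
      obtain ⟨p, _, rfl⟩ := hn
      exact (ptf_mem hs ht p).1
  have hdisjAM : ∀ m, Disjoint A (MfF m) := by
    intro m
    rw [Finset.disjoint_right]
    intro n hn hn'
    rw [hMfF, Finset.mem_image] at hn
    obtain ⟨p, _, rfl⟩ := hn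
    exact ptf_not_low hs hst p (mem_lowFin.mp hn').2
  have hcardM : ∀ m, (MfF m).card
      = (Finset.univ.filter fun p : Fin s × Fin t => m p.1 p.2 = true).card := by
    intro m
    rw [hMfF, Finset.card_image_of_injective _ (ptf_inj hs hst)]
  have hcount := count_low (x := x) hs ht hst
  have h2 : ∀ m, 2 * (((Finset.univ.filter fun p : Fin s × Fin t => m p.1 p.2 = true).card : ℤ))
      = (s : ℤ) * t - s - t - 1 - 2 * x → ((T m).card : ℤ) = -y := by
    intro m hc
    rw [hT]
    rw [Finset.card_union_of_disjoint (hdisjAM m), hcardM m]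
    push_cast
    rw [hy]
    rw [← hA] at hcount
    linarith
  have hLoweq : LowSet s t x = {n : ℤ | n < y} ∪ ↑A := by
    ext n
    simp only [Set.mem_union, Set.mem_setOf_eq, Finset.mem_coe]
    constructor
    · intro hn
      by_cases h : n < y
      · exact Or.inl h
      · refine Or.inr (mem_lowFin.mpr ⟨⟨by omega, ?_⟩, hn⟩)
        have := low_le_x n hn
        omega
    · rintro (h | h)
      · exact low_of_lt hs ht hst n h
      · exact (mem_lowFin.mp h).2
  have h3 : ∀ m, {n : ℤ | n < y} ∪ ↑(T m) = LowSet s t x ∪ pts m := by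
    intro m
    rw [hT]
    push_cast [Finset.coe_union]
    rw [← Set.union_assoc, ← hLoweq, hptsF]
  have main : ∀ m : Fin s → Fin t → Bool, ∃ l : SeqPartition,
      (2 * (((Finset.univ.filter fun p : Fin s × Fin t => m p.1 p.2 = true).card : ℤ))
          = (s : ℤ) * t - s - t - 1 - 2 * x) →
      l.betaSet = LowSet s t x ∪ pts m := by
    intro m
    by_cases hc : 2 * (((Finset.univ.filter fun p : Fin s × Fin t => m p.1 p.2 = true).card : ℤ))
        = (s : ℤ) * t - s - t - 1 - 2 * x
    · refine ⟨(exists_partition y (T m) (h1 m) (h2 m hc)).choose, fun _ => ?_⟩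
      rw [(exists_partition y (T m) (h1 m) (h2 m hc)).choose_spec, h3 m]
    · exact ⟨⟨0, fun i j _ => le_rfl⟩, fun h => absurd h hc⟩
  choose θ hθ using main
  have hLU : ∀ m, LowSet s t x ∪ pts m ∩ UpSet s t x = ∅ → True := fun _ _ => trivial
  refine ⟨θ, ⟨?_, ?_, ?_⟩, fun m hm => hθ m hm⟩
  · -- MapsTo
    intro m hm
    simp only [Set.mem_setOf_eq] at hm ⊢
    rw [PinchPoint, hθ m hm]
    constructor
    · exact Set.subset_union_left
    · apply Set.eq_empty_iff_forall_notMem.mpr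
      rintro n ⟨hn, hu⟩
      rcases hn with h | h
      · exact low_up_disj hs hst n h hu
      · obtain ⟨i, j, _, rfl⟩ := h
        exact ptf_not_up hs hst (i, j) hu
  · -- InjOn
    intro m hm m' hm' heq
    simp only [Set.mem_setOf_eq] at hm hm'
    have hb : LowSet s t x ∪ pts m = LowSet s t x ∪ pts m' := by
      rw [← hθ m hm, ← hθ m' hm', heq]
    have key : ∀ (mm : Fin s → Fin t → Bool) (i : Fin s) (j : Fin t),
        ptf s t x (i, j) ∈ LowSet s t x ∪ pts mm ↔ mm i j = true := by
      intro mm i j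
      constructor
      · rintro (h | ⟨i', j', hmm, hb'⟩)
        · exact absurd h (ptf_not_low hs hst (i, j))
        · have : (i, j) = (i', j') := ptf_inj hs hst hb'
          rw [Prod.mk.injEq] at this
          rw [this.1, this.2]
          exact hmm
      · intro h
        exact Or.inr ⟨i, j, h, rfl⟩
    funext i j
    have h1' := (key m i j).symm.trans (hb ▸ key m' i j)
    by_cases h : m i j = true
    · exact h.trans (h1'.mp h).symm
    · have h2' : m i j = false := by simp [Bool.not_eq_true] at h; exact h
      have h3' : m' i j = false := by
        by_contra hmm
        simp only [Bool.not_eq_false] at hmm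
        exact h (h1'.mpr hmm)
      rw [h2', h3']
  · -- SurjOn
    intro l hl
    simp only [Set.mem_setOf_eq] at hl
    set m : Fin s → Fin t → Bool := fun i j => decide (ptf s t x (i, j) ∈ l.betaSet) with hm
    have hmem : ∀ p : Fin s × Fin t, m p.1 p.2 = true ↔ ptf s t x p ∈ l.betaSet := by
      intro p
      rw [hm]
      simp only [decide_eq_true_eq]
    have hup : ∀ n, n ∈ l.betaSet → n ∉ UpSet s t x := by
      intro n hn hu
      have := hl.2
      rw [Set.eq_empty_iff_forall_notMem] at this
      exact this n ⟨hn, hu⟩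
    have hβ : l.betaSet = LowSet s t x ∪ pts m := by
      ext n
      constructor
      · intro hn
        rcases trichotomy (x := x) hs ht hst n with h | h | ⟨p, hp⟩
        · exact Or.inl h
        · exact absurd h (hup n hn)
        · exact Or.inr ⟨p.1, p.2, (hmem p).mpr (hp ▸ hn), hp⟩
      · rintro (h | ⟨i, j, hij, rfl⟩)
        · exact hl.1 h
        · exact (hmem (i, j)).mp hij
    obtain ⟨K, hKy, himg, hncard, hfin⟩ :=
      charge l y (fun n hn => hl.1 (low_of_lt hs ht hst n hn))
    have hsplit : l.betaSet ∩ Set.Ici y = ↑(A ∪ MfF m) := by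
      rw [Finset.coe_union]
      ext n
      simp only [Set.mem_inter_iff, Set.mem_Ici, Set.mem_union, Finset.mem_coe]
      constructor
      · rintro ⟨hn, hny⟩
        rcases trichotomy (x := x) hs ht hst n with h | h | ⟨p, hp⟩
        · refine Or.inl (mem_lowFin.mpr ⟨⟨hny, ?_⟩, h⟩)
          have := low_le_x n h
          omega
        · exact absurd h (hup n hn)
        · refine Or.inr ?_
          rw [hMfF, Finset.mem_image]
          exact ⟨p, Finset.mem_filter.mpr ⟨Finset.mem_univ p, (hmem p).mpr (hp ▸ hn)⟩, hp.symm⟩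
      · rintro (h | h)
        · exact ⟨hl.1 (mem_lowFin.mp h).2, (mem_lowFin.mp h).1.1⟩
        · rw [hMfF, Finset.mem_image] at h
          obtain ⟨p, hp, rfl⟩ := h
          exact ⟨(hmem p).mp (Finset.mem_filter.mp hp).2, (ptf_mem hs ht p).1⟩
    rw [hsplit, Set.ncard_coe_finset, Finset.card_union_of_disjoint (hdisjAM m),
      hcardM m] at hncard
    have hcond : 2 * (((Finset.univ.filter fun p : Fin s × Fin t => m p.1 p.2 = true).card : ℤ))
        = (s : ℤ) * t - s - t - 1 - 2 * x := by
      rw [← hA] at hcount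
      have : ((A.card : ℤ)) + ((Finset.univ.filter fun p : Fin s × Fin t =>
          m p.1 p.2 = true).card : ℤ) = (K : ℤ) := by exact_mod_cast hncard
      rw [hKy, hy] at this
      linarith
    refine ⟨m, hcond, ?_⟩
    apply betaSet_inj
    rw [hθ m hcond, hβ]
end Charge
end
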